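/- Let three players have measures on [0,1] with densities: f₁ = 2.4 on (0,1/6)∪(1/2,2/3) and 0.3 elsewhere; f₂ = 2.4 on (1/6,1/3)∪(2/3,5/6) and 0.3 elsewhere; f₃ = 2.4 on (1/3,1/2)∪(5/6,1) and 0.3 elsewhere. The contiguous allocation giving [0,1/3] to player 1, [1/3,2/3] to player 3, and [2/3,1] to player 2 gives each player value 0.45, while the allocation giving each player i the set where fᵢ = 2.4 gives each player value 0.8. Hence the contiguous allocation is not weakly Pareto optimal. -/

import Mathlib

open MeasureTheory ENNReal

/-- Player 1's density: `2.4 = 12/5` on `(0,1/6) ∪ (1/2,2/3)`, `0.3 = 3/10` elsewhere. -/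
noncomputable def f1 (x : ℝ) : ℝ≥0∞ :=
  if x ∈ Set.Ioo (0:ℝ) (1/6) ∪ Set.Ioo (1/2 : ℝ) (2/3) then 12/5 else 3/10

/-- Player 2's density: `2.4` on `(1/6,1/3) ∪ (2/3,5/6)`, `0.3` elsewhere. -/
noncomputable def f2 (x : ℝ) : ℝ≥0∞ :=
  if x ∈ Set.Ioo (1/6 : ℝ) (1/3) ∪ Set.Ioo (2/3 : ℝ) (5/6) then 12/5 else 3/10

/-- Player 3's density: `2.4` on `(1/3,1/2) ∪ (5/6,1)`, `0.3` elsewhere. -/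
noncomputable def f3 (x : ℝ) : ℝ≥0∞ :=
  if x ∈ Set.Ioo (1/3 : ℝ) (1/2) ∪ Set.Ioo (5/6 : ℝ) 1 then 12/5 else 3/10

noncomputable def mu1 : Measure ℝ := (volume.restrict (Set.Icc (0:ℝ) 1)).withDensity f1
noncomputable def mu2 : Measure ℝ := (volume.restrict (Set.Icc (0:ℝ) 1)).withDensity f2
noncomputable def mu3 : Measure ℝ := (volume.restrict (Set.Icc (0:ℝ) 1)).withDensity f3

/-- Weak Pareto optimality of a three-player allocation `(A₁, A₂, A₃)`:
no other partition of the cake strictly improves every player. -/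
def WeaklyPO3 (ν₁ ν₂ ν₃ : Measure ℝ) (X A₁ A₂ A₃ : Set ℝ) : Prop :=
  ¬ ∃ B₁ B₂ B₃ : Set ℝ, B₁ ∪ B₂ ∪ B₃ = X ∧
      Disjoint B₁ B₂ ∧ Disjoint B₁ B₃ ∧ Disjoint B₂ B₃ ∧
      ν₁ A₁ < ν₁ B₁ ∧ ν₂ A₂ < ν₂ B₂ ∧ ν₃ A₃ < ν₃ B₃

open Classical in
lemma eval_aux (U : Set ℝ) (hU : MeasurableSet U) (f : ℝ → ℝ≥0∞)
    (hf : ∀ x, f x = if x ∈ U then 12/5 else 3/10) (S : Set ℝ) (hS : MeasurableSet S) :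
    ((volume.restrict (Set.Icc (0:ℝ) 1)).withDensity f) S
      = 12/5 * volume (S ∩ Set.Icc 0 1 ∩ U) + 3/10 * volume ((S ∩ Set.Icc 0 1) \ U) := by
  classical
  rw [withDensity_apply _ hS, Measure.restrict_restrict hS,
    ← lintegral_inter_add_diff f (S ∩ Set.Icc 0 1) hU]
  have hTm : MeasurableSet (S ∩ Set.Icc (0:ℝ) 1) := hS.inter measurableSet_Icc
  have h1 : ∫⁻ x in (S ∩ Set.Icc (0:ℝ) 1) ∩ U, f x = 12/5 * volume (S ∩ Set.Icc (0:ℝ) 1 ∩ U) := by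
    rw [setLIntegral_congr_fun (hTm.inter hU)
      (fun x hx => by rw [hf x, if_pos hx.2]),
      setLIntegral_const]
  have h2 : ∫⁻ x in (S ∩ Set.Icc (0:ℝ) 1) \ U, f x = 3/10 * volume ((S ∩ Set.Icc (0:ℝ) 1) \ U) := by
    rw [setLIntegral_congr_fun (hTm.diff hU)
      (fun x hx => by rw [hf x, if_neg hx.2]),
      setLIntegral_const]
  rw [h1, h2]

lemma vol_diff (T U : Set ℝ) (hT : MeasurableSet T) (hU : MeasurableSet U)
    (hfin : volume (T ∩ U) ≠ ⊤) :
    volume (T \ U) = volume T - volume (T ∩ U) := by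
  rw [← Set.diff_self_inter]
  exact measure_diff Set.inter_subset_left (hT.inter hU).nullMeasurableSet hfin

lemma lit_div (a b : ℕ) [a.AtLeastTwo] [b.AtLeastTwo] (hb : (0:ℝ) < b) :
    ((a : ℝ≥0∞) / b) = ENNReal.ofReal ((a : ℝ) / b) := by
  rw [ENNReal.ofReal_div_of_pos hb, ENNReal.ofReal_natCast, ENNReal.ofReal_natCast]

lemma arith (x t z : ℝ) (hx : 0 ≤ x) (hxt : x ≤ t)
    (h : 12/5 * x + 3/10 * (t - x) = z) :
    (12/5 : ℝ≥0∞) * ENNReal.ofReal x + 3/10 * (ENNReal.ofReal t - ENNReal.ofReal x)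
      = ENNReal.ofReal z := by
  rw [← ENNReal.ofReal_sub _ hx,
    show (12/5 : ℝ≥0∞) = ENNReal.ofReal (12/5) by rw [ENNReal.ofReal_div_of_pos] <;> norm_num,
    show (3/10 : ℝ≥0∞) = ENNReal.ofReal (3/10) by rw [ENNReal.ofReal_div_of_pos] <;> norm_num,
    ← ENNReal.ofReal_mul (by norm_num), ← ENNReal.ofReal_mul (by norm_num),
    ← ENNReal.ofReal_add (by linarith) (by nlinarith), h]

lemma arith2 (x z : ℝ) (h : 12/5 * x = z) :
    (12/5 : ℝ≥0∞) * ENNReal.ofReal x = ENNReal.ofReal z := by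
  rw [show (12/5 : ℝ≥0∞) = ENNReal.ofReal (12/5) by rw [ENNReal.ofReal_div_of_pos] <;> norm_num,
    ← ENNReal.ofReal_mul (by norm_num), h]

lemma dIoo {a b c d : ℝ} (h : b ≤ c) : Disjoint (Set.Ioo a b) (Set.Ioo c d) := by
  rw [Set.Ioo_disjoint_Ioo]
  exact (min_le_left _ _).trans (h.trans (le_max_right _ _))

lemma lt920 : (9/20 : ℝ≥0∞) < 4/5 := by
  rw [show (9/20:ℝ≥0∞) = ENNReal.ofReal (9/20) by rw [ENNReal.ofReal_div_of_pos] <;> norm_num,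
      show (4/5:ℝ≥0∞) = ENNReal.ofReal (4/5) by rw [ENNReal.ofReal_div_of_pos] <;> norm_num,
      ENNReal.ofReal_lt_ofReal_iff (by norm_num)]
  norm_num

theorem stmt_7 :
    mu1 (Set.Icc (0:ℝ) (1/3)) = 9/20 ∧
    mu3 (Set.Icc (1/3 : ℝ) (2/3)) = 9/20 ∧
    mu2 (Set.Icc (2/3 : ℝ) 1) = 9/20 ∧
    mu1 (Set.Ioo (0:ℝ) (1/6) ∪ Set.Ioo (1/2 : ℝ) (2/3)) = 4/5 ∧
    mu2 (Set.Ioo (1/6 : ℝ) (1/3) ∪ Set.Ioo (2/3 : ℝ) (5/6)) = 4/5 ∧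
    mu3 (Set.Ioo (1/3 : ℝ) (1/2) ∪ Set.Ioo (5/6 : ℝ) 1) = 4/5 ∧
    ¬ WeaklyPO3 mu1 mu2 mu3 (Set.Icc (0:ℝ) 1)
        (Set.Icc (0:ℝ) (1/3)) (Set.Icc (2/3 : ℝ) 1) (Set.Icc (1/3 : ℝ) (2/3)) := by
  classical
  set U1 : Set ℝ := Set.Ioo (0:ℝ) (1/6) ∪ Set.Ioo (1/2 : ℝ) (2/3) with hU1def
  set U2 : Set ℝ := Set.Ioo (1/6 : ℝ) (1/3) ∪ Set.Ioo (2/3 : ℝ) (5/6) with hU2def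
  set U3 : Set ℝ := Set.Ioo (1/3 : ℝ) (1/2) ∪ Set.Ioo (5/6 : ℝ) 1 with hU3def
  have hU1 : MeasurableSet U1 := measurableSet_Ioo.union measurableSet_Ioo
  have hU2 : MeasurableSet U2 := measurableSet_Ioo.union measurableSet_Ioo
  have hU3 : MeasurableSet U3 := measurableSet_Ioo.union measurableSet_Ioo
  have hf1 : ∀ x, f1 x = @ite _ (x ∈ U1) (Classical.propDecidable _) (12/5 : ℝ≥0∞) (3/10) := fun x => by
    by_cases h : x ∈ U1 <;> simp [f1, hU1def, h]
  have hf2 : ∀ x, f2 x = @ite _ (x ∈ U2) (Classical.propDecidable _) (12/5 : ℝ≥0∞) (3/10) := fun x => by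
    by_cases h : x ∈ U2 <;> simp [f2, hU2def, h]
  have hf3 : ∀ x, f3 x = @ite _ (x ∈ U3) (Classical.propDecidable _) (12/5 : ℝ≥0∞) (3/10) := fun x => by
    by_cases h : x ∈ U3 <;> simp [f3, hU3def, h]
  -- set identities
  have i1 : Set.Icc (0:ℝ) (1/3) ∩ Set.Icc 0 1 = Set.Icc (0:ℝ) (1/3) :=
    Set.inter_eq_left.mpr (Set.Icc_subset_Icc le_rfl (by norm_num))
  have i2 : Set.Icc (1/3:ℝ) (2/3) ∩ Set.Icc 0 1 = Set.Icc (1/3:ℝ) (2/3) :=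
    Set.inter_eq_left.mpr (Set.Icc_subset_Icc (by norm_num) (by norm_num))
  have i3 : Set.Icc (2/3:ℝ) 1 ∩ Set.Icc 0 1 = Set.Icc (2/3:ℝ) 1 :=
    Set.inter_eq_left.mpr (Set.Icc_subset_Icc (by norm_num) le_rfl)
  have j1 : Set.Icc (0:ℝ) (1/3) ∩ U1 = Set.Ioo (0:ℝ) (1/6) := by
    ext x
    simp only [hU1def, Set.mem_inter_iff, Set.mem_union, Set.mem_Icc, Set.mem_Ioo]
    constructor
    · rintro ⟨⟨h1, h2⟩, ⟨h3, h4⟩ | ⟨h3, h4⟩⟩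
      · exact ⟨h3, h4⟩
      · exact ⟨by linarith, by linarith⟩
    · rintro ⟨h1, h2⟩
      exact ⟨⟨h1.le, by linarith⟩, Or.inl ⟨h1, h2⟩⟩
  have j2 : Set.Icc (1/3:ℝ) (2/3) ∩ U3 = Set.Ioo (1/3:ℝ) (1/2) := by
    ext x
    simp only [hU3def, Set.mem_inter_iff, Set.mem_union, Set.mem_Icc, Set.mem_Ioo]
    constructor
    · rintro ⟨⟨h1, h2⟩, ⟨h3, h4⟩ | ⟨h3, h4⟩⟩
      · exact ⟨h3, h4⟩
      · exact ⟨by linarith, by linarith⟩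
    · rintro ⟨h1, h2⟩
      exact ⟨⟨h1.le, by linarith⟩, Or.inl ⟨h1, h2⟩⟩
  have j3 : Set.Icc (2/3:ℝ) 1 ∩ U2 = Set.Ioo (2/3:ℝ) (5/6) := by
    ext x
    simp only [hU2def, Set.mem_inter_iff, Set.mem_union, Set.mem_Icc, Set.mem_Ioo]
    constructor
    · rintro ⟨⟨h1, h2⟩, ⟨h3, h4⟩ | ⟨h3, h4⟩⟩
      · exact ⟨by linarith, by linarith⟩
      · exact ⟨h3, h4⟩
    · rintro ⟨h1, h2⟩
      exact ⟨⟨h1.le, by linarith⟩, Or.inr ⟨h1, h2⟩⟩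
  have sub1 : U1 ⊆ Set.Icc (0:ℝ) 1 := by
    rintro x (⟨a, b⟩ | ⟨a, b⟩) <;> exact ⟨by linarith, by linarith⟩
  have sub2 : U2 ⊆ Set.Icc (0:ℝ) 1 := by
    rintro x (⟨a, b⟩ | ⟨a, b⟩) <;> exact ⟨by linarith, by linarith⟩
  have sub3 : U3 ⊆ Set.Icc (0:ℝ) 1 := by
    rintro x (⟨a, b⟩ | ⟨a, b⟩) <;> exact ⟨by linarith, by linarith⟩
  -- volumes of the U's
  have vU1 : volume U1 = ENNReal.ofReal (1/3) := by
    rw [hU1def, measure_union (dIoo (by norm_num)) measurableSet_Ioo,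
      Real.volume_Ioo, Real.volume_Ioo, ← ENNReal.ofReal_add (by norm_num) (by norm_num)]
    norm_num
  have vU2 : volume U2 = ENNReal.ofReal (1/3) := by
    rw [hU2def, measure_union (dIoo (by norm_num)) measurableSet_Ioo,
      Real.volume_Ioo, Real.volume_Ioo, ← ENNReal.ofReal_add (by norm_num) (by norm_num)]
    norm_num
  have vU3 : volume U3 = ENNReal.ofReal (1/3) := by
    rw [hU3def, measure_union (dIoo (by norm_num)) measurableSet_Ioo,
      Real.volume_Ioo, Real.volume_Ioo, ← ENNReal.ofReal_add (by norm_num) (by norm_num)]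
    norm_num
  -- the six measure computations
  have h1 : mu1 (Set.Icc (0:ℝ) (1/3)) = 9/20 := by
    rw [mu1, eval_aux U1 hU1 f1 hf1 _ measurableSet_Icc, i1,
      vol_diff _ _ measurableSet_Icc hU1 (by rw [j1, Real.volume_Ioo]; exact ofReal_ne_top),
      j1, Real.volume_Ioo, Real.volume_Icc,
      show (9/20:ℝ≥0∞) = ENNReal.ofReal (9/20) by rw [ENNReal.ofReal_div_of_pos] <;> norm_num]
    exact arith _ _ _ (by norm_num) (by norm_num) (by norm_num)
  have h2 : mu3 (Set.Icc (1/3:ℝ) (2/3)) = 9/20 := by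
    rw [mu3, eval_aux U3 hU3 f3 hf3 _ measurableSet_Icc, i2,
      vol_diff _ _ measurableSet_Icc hU3 (by rw [j2, Real.volume_Ioo]; exact ofReal_ne_top),
      j2, Real.volume_Ioo, Real.volume_Icc,
      show (9/20:ℝ≥0∞) = ENNReal.ofReal (9/20) by rw [ENNReal.ofReal_div_of_pos] <;> norm_num]
    exact arith _ _ _ (by norm_num) (by norm_num) (by norm_num)
  have h3 : mu2 (Set.Icc (2/3:ℝ) 1) = 9/20 := by
    rw [mu2, eval_aux U2 hU2 f2 hf2 _ measurableSet_Icc, i3,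
      vol_diff _ _ measurableSet_Icc hU2 (by rw [j3, Real.volume_Ioo]; exact ofReal_ne_top),
      j3, Real.volume_Ioo, Real.volume_Icc,
      show (9/20:ℝ≥0∞) = ENNReal.ofReal (9/20) by rw [ENNReal.ofReal_div_of_pos] <;> norm_num]
    exact arith _ _ _ (by norm_num) (by norm_num) (by norm_num)
  have h4 : mu1 U1 = 4/5 := by
    rw [mu1, eval_aux U1 hU1 f1 hf1 _ hU1, Set.inter_eq_left.mpr sub1, Set.inter_self,
      Set.diff_self, measure_empty, mul_zero, add_zero, vU1,
      show (4/5:ℝ≥0∞) = ENNReal.ofReal (4/5) by rw [ENNReal.ofReal_div_of_pos] <;> norm_num]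
    exact arith2 _ _ (by norm_num)
  have h5 : mu2 U2 = 4/5 := by
    rw [mu2, eval_aux U2 hU2 f2 hf2 _ hU2, Set.inter_eq_left.mpr sub2, Set.inter_self,
      Set.diff_self, measure_empty, mul_zero, add_zero, vU2,
      show (4/5:ℝ≥0∞) = ENNReal.ofReal (4/5) by rw [ENNReal.ofReal_div_of_pos] <;> norm_num]
    exact arith2 _ _ (by norm_num)
  have h6 : mu3 U3 = 4/5 := by
    rw [mu3, eval_aux U3 hU3 f3 hf3 _ hU3, Set.inter_eq_left.mpr sub3, Set.inter_self,
      Set.diff_self, measure_empty, mul_zero, add_zero, vU3,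
      show (4/5:ℝ≥0∞) = ENNReal.ofReal (4/5) by rw [ENNReal.ofReal_div_of_pos] <;> norm_num]
    exact arith2 _ _ (by norm_num)
  refine ⟨h1, h2, h3, h4, h5, h6, ?_⟩
  -- not weakly Pareto optimal
  intro hPO
  have hsub12 : U1 ∪ U2 ⊆ Set.Icc (0:ℝ) 1 := Set.union_subset sub1 sub2
  have hB3 : U3 ⊆ Set.Icc (0:ℝ) 1 \ (U1 ∪ U2) := by
    rintro x (⟨a, b⟩ | ⟨a, b⟩) <;>
      refine ⟨⟨by linarith, by linarith⟩, ?_⟩ <;>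
      rintro ((⟨c, d⟩ | ⟨c, d⟩) | (⟨c, d⟩ | ⟨c, d⟩)) <;> linarith
  refine hPO ⟨U1, U2, Set.Icc (0:ℝ) 1 \ (U1 ∪ U2), Set.union_diff_cancel hsub12, ?_, ?_, ?_, ?_, ?_, ?_⟩
  · exact Set.disjoint_union_left.mpr
      ⟨Set.disjoint_union_right.mpr ⟨dIoo (by norm_num), dIoo (by norm_num)⟩,
       Set.disjoint_union_right.mpr ⟨(dIoo (by norm_num)).symm, dIoo (by norm_num)⟩⟩
  · exact Set.disjoint_sdiff_right.mono_left Set.subset_union_left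
  · exact Set.disjoint_sdiff_right.mono_left Set.subset_union_right
  · rw [h1, h4]; exact lt920
  · rw [h3, h5]; exact lt920
  · rw [h2]
    calc (9/20:ℝ≥0∞) < 4/5 := lt920
      _ = mu3 U3 := h6.symm
      _ ≤ _ := measure_mono hB3
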